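/- For all p, q ∈ (0,1) with q ≠ 1/2, one has (1−2q)·p / log((1−q)/q) ≤ log(1−p)/log(q). -/

import Mathlib

open Real Set

private lemma concave_log_one_sub : ConcaveOn ℝ (Set.Iio (1:ℝ)) (fun x => Real.log (1 - x)) := by
  refine ⟨convex_Iio 1, fun x hx y hy a b ha hb hab => ?_⟩
  have hx' : (1:ℝ) - x ∈ Set.Ioi (0:ℝ) := by simp at hx ⊢; linarith
  have hy' : (1:ℝ) - y ∈ Set.Ioi (0:ℝ) := by simp at hy ⊢; linarith
  have := (strictConcaveOn_log_Ioi.concaveOn).2 hx' hy' ha hb hab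
  have heq : a • (1 - x) + b • (1 - y) = 1 - (a • x + b • y) := by
    simp only [smul_eq_mul]; nlinarith
  rw [heq] at this
  simpa using this

private lemma concaveF : ConcaveOn ℝ (Set.Ico (0:ℝ) 1)
    (fun x => Real.log (1 - x) + 2 * Real.negMulLog x) := by
  have h1 := concave_log_one_sub.subset (fun x hx => hx.2) (convex_Ico 0 1)
  have h2 := (Real.concaveOn_negMulLog.smul (by norm_num : (0:ℝ) ≤ 2)).subset
    (fun x hx => hx.1) (convex_Ico 0 1)
  exact h1.add h2

private lemma F_zero : Real.log (1 - (0:ℝ)) + 2 * Real.negMulLog 0 = 0 := by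
  simp

private lemma F_half : Real.log (1 - (1/2:ℝ)) + 2 * Real.negMulLog (1/2) = 0 := by
  rw [show (1:ℝ) - 1/2 = 1/2 by norm_num, Real.negMulLog]; ring

/-- Core: for `0 < q ≤ 1/2`, `2 q log q ≤ log (1-q)`. -/
private lemma core_le (q : ℝ) (hq0 : 0 < q) (hq2 : q ≤ 1/2) :
    2 * q * Real.log q ≤ Real.log (1 - q) := by
  have h0 : (0:ℝ) ∈ Set.Ico (0:ℝ) 1 := by constructor <;> norm_num
  have hh : (1/2:ℝ) ∈ Set.Ico (0:ℝ) 1 := by constructor <;> norm_num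
  have ha : (0:ℝ) ≤ 1 - 2*q := by linarith
  have hb : (0:ℝ) ≤ 2*q := by linarith
  have hab : (1 - 2*q) + 2*q = 1 := by ring
  have := concaveF.2 h0 hh ha hb hab
  simp only [smul_eq_mul] at this
  have heq : (1 - 2*q) * 0 + 2*q * (1/2) = q := by ring
  rw [heq] at this
  rw [F_zero, F_half] at this
  simp only [Real.negMulLog] at this
  nlinarith [this]

/-- Core: for `1/2 ≤ q < 1`, `log (1-q) ≤ 2 q log q`. -/
private lemma core_ge (q : ℝ) (hq2 : 1/2 ≤ q) (hq1 : q < 1) :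
    Real.log (1 - q) ≤ 2 * q * Real.log q := by
  have hq0 : (0:ℝ) < q := by linarith
  have h0 : (0:ℝ) ∈ Set.Ico (0:ℝ) 1 := by constructor <;> norm_num
  have hqm : q ∈ Set.Ico (0:ℝ) 1 := ⟨le_of_lt hq0, hq1⟩
  have ha : (0:ℝ) ≤ 1 - 1/(2*q) := by
    have : 1/(2*q) ≤ 1 := by
      rw [div_le_one (by linarith)]; linarith
    linarith
  have hb : (0:ℝ) ≤ 1/(2*q) := by positivity
  have hab : (1 - 1/(2*q)) + 1/(2*q) = 1 := by ring
  have := concaveF.2 h0 hqm ha hb hab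
  simp only [smul_eq_mul] at this
  have heq : (1 - 1/(2*q)) * 0 + 1/(2*q) * q = 1/2 := by
    field_simp; ring
  rw [heq, F_zero, F_half] at this
  have h2q : (0:ℝ) < 1/(2*q) := by positivity
  have hF : Real.log (1 - q) + 2 * Real.negMulLog q ≤ 0 := by
    by_contra h
    push_neg at h
    nlinarith [this]
  simp only [Real.negMulLog] at hF
  nlinarith [hF]

/-- For `p, q ∈ (0,1)` with `q ≠ 1/2`,
`(1-2q)p / log((1-q)/q) ≤ log(1-p)/log(q)`. -/
theorem lamp_key_ineq (p q : ℝ) (hp0 : 0 < p) (hp1 : p < 1)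
    (hq0 : 0 < q) (hq1 : q < 1) (hq : q ≠ 1/2) :
    (1 - 2*q) * p / Real.log ((1 - q) / q) ≤ Real.log (1 - p) / Real.log q := by
  have h1q : (0:ℝ) < 1 - q := by linarith
  have hlq : Real.log q < 0 := Real.log_neg hq0 hq1
  have hA : Real.log ((1 - q) / q) = Real.log (1 - q) - Real.log q :=
    Real.log_div (by linarith) (by linarith)
  have hlp : Real.log (1 - p) ≤ -p := by
    have := Real.log_le_sub_one_of_pos (show (0:ℝ) < 1 - p by linarith)
    linarith
  -- RHS lower bound: p/(-log q) ≤ log(1-p)/log q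
  have hRHS : p / (-Real.log q) ≤ Real.log (1 - p) / Real.log q := by
    have h := (div_le_div_iff_of_pos_right (show (0:ℝ) < -Real.log q by linarith)).mpr
      (show p ≤ -Real.log (1 - p) by linarith)
    rwa [neg_div_neg_eq] at h
  refine le_trans ?_ hRHS
  rw [hA]
  rcases lt_or_gt_of_ne hq with h | h
  · -- q < 1/2
    have hApos : (0:ℝ) < Real.log (1 - q) - Real.log q := by
      have := Real.log_lt_log hq0 (show q < 1 - q by linarith)
      linarith
    rw [div_le_div_iff₀ hApos (by linarith : (0:ℝ) < -Real.log q)]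
    have hcore := core_le q hq0 (le_of_lt h)
    nlinarith [mul_nonneg hp0.le (sub_nonneg.mpr hcore)]
  · -- q > 1/2
    have hAneg : (0:ℝ) < Real.log q - Real.log (1 - q) := by
      have := Real.log_lt_log h1q (show 1 - q < q by linarith)
      linarith
    rw [show (1 - 2*q)*p = -((2*q-1)*p) by ring,
        show Real.log (1-q) - Real.log q = -(Real.log q - Real.log (1-q)) by ring,
        neg_div_neg_eq,
        div_le_div_iff₀ hAneg (by linarith : (0:ℝ) < -Real.log q)]
    have hcore := core_ge q (le_of_lt h) hq1
    nlinarith [mul_nonneg hp0.le (sub_nonneg.mpr hcore)]
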